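/- Let (R, m) be an Artinian commutative local ring with m^3 = (0) and m^2 ≠ (0), and let x ∈ m with x ∉ m^2. If the cyclic module Rx has exactly one nonzero proper R-submodule, then dim_{R/m}(Ann(x)/m^2) = dim_{R/m}(m/m^2) − 1. -/

import Mathlib

set_option maxHeartbeats 1000000

open IsLocalRing

/-- Let `(R, m)` be Artinian local with `m ^ 3 = 0 ≠ m ^ 2` and `x ∈ m \ m ^ 2`.
If `Rx` has exactly one nonzero proper submodule, then
`dim_{R/m} (Ann(x)/m²) = dim_{R/m} (m/m²) − 1`. -/
theorem stmt8 (R : Type*) [CommRing R] [IsLocalRing R] [IsArtinianRing R]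
    (hm3 : (maximalIdeal R) ^ 3 = ⊥) (hm2 : (maximalIdeal R) ^ 2 ≠ ⊥)
    (x : R) (hx : x ∈ maximalIdeal R) (hx2 : x ∉ (maximalIdeal R) ^ 2)
    (huniq : ∃! N : Submodule R ↥(Submodule.span R {x}), N ≠ ⊥ ∧ N ≠ ⊤)
    (k : ℕ)
    (hk : Nonempty
      ((↥(maximalIdeal R) ⧸
          (Submodule.comap (maximalIdeal R).subtype ((maximalIdeal R) ^ 2)))
        ≃ₗ[R] (Fin k → ResidueField R))) :
    Nonempty
      ((↥((Submodule.span R {x}).annihilator) ⧸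
          (Submodule.comap ((Submodule.span R {x}).annihilator : Ideal R).subtype
            ((maximalIdeal R) ^ 2)))
        ≃ₗ[R] (Fin (k - 1) → ResidueField R)) := by
  classical
  obtain ⟨e⟩ := hk
  set κ := ResidueField R with hκ
  set m : Ideal R := maximalIdeal R with hmdef
  set A : Ideal R := (Submodule.span R {x}).annihilator with hAdef
  have hx0 : x ≠ 0 := fun h => hx2 (h ▸ zero_mem _)
  have memA : ∀ r : R, r ∈ A ↔ r * x = 0 := fun r => by
    rw [hAdef, Submodule.mem_annihilator_span_singleton, smul_eq_mul]
  have hm2A : m ^ 2 ≤ A := by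
    intro y hy
    rw [memA]
    have h3 : y * x ∈ m ^ 3 := by
      have h32 : m ^ 3 = m ^ 2 * m := by ring
      rw [h32]; exact Ideal.mul_mem_mul hy hx
    rw [hmdef, hm3] at h3; exact h3
  have hAm : A ≤ m := by
    intro r hr
    by_contra hrm
    have hu : IsUnit r := by
      by_contra h
      exact hrm ((IsLocalRing.mem_maximalIdeal r).mpr h)
    exact hx0 ((hu.mul_right_eq_zero).mp ((memA r).mp hr))
  have hxel : x ∈ Submodule.span R {x} := Submodule.mem_span_singleton_self x
  -- any submodule of Rx containing x is everything
  have htop : ∀ N : Submodule R ↥(Submodule.span R {x}),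
      (⟨x, hxel⟩ : ↥(Submodule.span R {x})) ∈ N → N = ⊤ := by
    intro N hN
    rw [eq_top_iff]
    rintro ⟨v, hv⟩ -
    obtain ⟨s, hs⟩ := Submodule.mem_span_singleton.mp hv
    have hvs : (⟨v, hv⟩ : ↥(Submodule.span R {x})) = s • ⟨x, hxel⟩ := by
      apply Subtype.ext
      simpa using hs.symm
    rw [hvs]
    exact N.smul_mem s hN
  -- the element `r • x` of `Rx`
  let elt : R → ↥(Submodule.span R {x}) := fun r => ⟨r • x, Submodule.smul_mem _ r hxel⟩
  have hone_not : (1 : R) ∉ m := by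
    intro h1
    exact (Ideal.ne_top_iff_one m).mp (IsLocalRing.maximalIdeal.isMaximal R).ne_top h1
  have hNa : ∀ a, a ∈ m → a ∉ A →
      (Submodule.span R {elt a} ≠ ⊥ ∧ Submodule.span R {elt a} ≠ ⊤) := by
    intro a ham haA
    constructor
    · rw [Ne, Submodule.span_singleton_eq_bot]
      intro h
      apply haA
      rw [memA, ← smul_eq_mul]
      simpa [elt] using congrArg Subtype.val h
    · intro h
      have hxmem : (⟨x, hxel⟩ : ↥(Submodule.span R {x})) ∈ Submodule.span R {elt a} := by
        rw [h]; trivial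
      obtain ⟨r, hr⟩ := Submodule.mem_span_singleton.mp hxmem
      have hr' : r * a * x = x := by
        have := congrArg Subtype.val hr
        simpa [elt, smul_smul, mul_assoc] using this
      have h1 : (1 - r * a) ∈ A := by
        rw [memA]
        have : (1 - r * a) * x = x - r * a * x := by ring
        rw [this, hr', sub_self]
      apply hone_not
      have h2 : r * a ∈ m := m.mul_mem_left r ham
      have := m.add_mem (hAm h1) h2
      simpa using this
  obtain ⟨N, hNprop, hNuniq⟩ := huniq
  -- there is an element of m not in A
  have hex : ∃ a, a ∈ m ∧ a ∉ A := by
    by_contra h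
    push_neg at h
    obtain ⟨n, hnN, hn0⟩ := (Submodule.ne_bot_iff N).mp hNprop.1
    obtain ⟨r, hr⟩ := Submodule.mem_span_singleton.mp n.2
    have hrA : r ∉ A := by
      intro hrA
      apply hn0
      have : (n : R) = 0 := by
        rw [← hr, smul_eq_mul]; exact (memA r).mp hrA
      exact Subtype.ext this
    have hrm : r ∉ m := fun hrm => hrA (h r hrm)
    have hu : IsUnit r := by
      by_contra hru
      exact hrm ((IsLocalRing.mem_maximalIdeal r).mpr hru)
    obtain ⟨u, rfl⟩ := hu
    have hxN : (⟨x, hxel⟩ : ↥(Submodule.span R {x})) ∈ N := by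
      have hval : (⟨x, hxel⟩ : ↥(Submodule.span R {x})) = (↑u⁻¹ : R) • n := by
        apply Subtype.ext
        have : ((↑u⁻¹ : R) • n : ↥(Submodule.span R {x})) = ⟨(↑u⁻¹ : R) • ↑n, _⟩ := rfl
        rw [this]
        simp [← hr, smul_smul]
      rw [hval]
      exact N.smul_mem _ hnN
    exact hNprop.2 (htop N hxN)
  obtain ⟨a, ham, haA⟩ := hex
  have hNaN : Submodule.span R {elt a} = N := hNuniq _ (hNa a ham haA)
  -- the key structural fact : m = A ⊔ (a)
  have hgen : ∀ b ∈ m, b ∈ A ⊔ Ideal.span {a} := by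
    intro b hbm
    by_cases hbA : b ∈ A
    · exact Submodule.mem_sup_left hbA
    · have hNbN : Submodule.span R {elt b} = N := hNuniq _ (hNa b hbm hbA)
      have hmem : elt b ∈ Submodule.span R {elt a} := by
        rw [hNaN, ← hNbN]
        exact Submodule.mem_span_singleton_self _
      obtain ⟨r, hr⟩ := Submodule.mem_span_singleton.mp hmem
      have hval : r * a * x = b * x := by
        have := congrArg Subtype.val hr
        simpa [elt, smul_smul, mul_assoc] using this
      have hd : (b - r * a) ∈ A := by
        rw [memA]
        have : (b - r * a) * x = b * x - r * a * x := by ring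
        rw [this, hval, sub_self]
      have hb : b = (b - r * a) + r * a := by ring
      rw [hb]
      exact Submodule.add_mem _ (Submodule.mem_sup_left hd)
        (Submodule.mem_sup_right (Ideal.mem_span_singleton'.mpr ⟨r, rfl⟩))
  -- set up the quotient modules
  set p2 : Submodule R ↥m := Submodule.comap m.subtype (m ^ 2) with hp2
  set pA : Submodule R ↥m := Submodule.comap m.subtype (A : Submodule R R) with hpA
  set q2 : Submodule R ↥A := Submodule.comap A.subtype (m ^ 2) with hq2
  -- the projection π : m/m² → m/A
  have hle : p2 ≤ LinearMap.ker pA.mkQ := by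
    rw [Submodule.ker_mkQ]
    intro y hy
    exact hm2A hy
  set π : (↥m ⧸ p2) →ₗ[R] (↥m ⧸ pA) := Submodule.liftQ p2 pA.mkQ hle with hπ
  have hπsurj : Function.Surjective π := by
    intro t
    obtain ⟨w, rfl⟩ := pA.mkQ_surjective t
    exact ⟨p2.mkQ w, rfl⟩
  have hπker : LinearMap.ker π = Submodule.map p2.mkQ pA := by
    rw [hπ, Submodule.ker_liftQ, Submodule.ker_mkQ]
  -- the map ψ : A/m² → m/m²
  set ψ0 : ↥A →ₗ[R] (↥m ⧸ p2) := p2.mkQ ∘ₗ Submodule.inclusion hAm with hψ0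
  have hψ0le : q2 ≤ LinearMap.ker ψ0 := by
    intro y hy
    rw [LinearMap.mem_ker, hψ0, LinearMap.comp_apply, Submodule.mkQ_apply,
      Submodule.Quotient.mk_eq_zero]
    exact hy
  set ψ : (↥A ⧸ q2) →ₗ[R] (↥m ⧸ p2) := Submodule.liftQ q2 ψ0 hψ0le with hψ
  have hψker : LinearMap.ker ψ = ⊥ := by
    apply Submodule.ker_liftQ_eq_bot
    intro y hy
    rw [LinearMap.mem_ker, hψ0, LinearMap.comp_apply, Submodule.mkQ_apply,
      Submodule.Quotient.mk_eq_zero] at hy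
    exact hy
  have hψrange : LinearMap.range ψ = Submodule.map p2.mkQ pA := by
    rw [hψ, Submodule.range_liftQ]
    ext z
    simp only [LinearMap.mem_range, Submodule.mem_map, hψ0, LinearMap.comp_apply]
    constructor
    · rintro ⟨y, rfl⟩
      exact ⟨Submodule.inclusion hAm y, y.2, rfl⟩
    · rintro ⟨w, hw, rfl⟩
      exact ⟨⟨↑w, hw⟩, by apply congrArg; apply Subtype.ext; rfl⟩
  have hrange_ker : LinearMap.range ψ = LinearMap.ker π := hψrange.trans hπker.symm
  -- the residue field maps onto m/A via r ↦ r·a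
  set g : R →ₗ[R] (↥m ⧸ pA) := pA.mkQ ∘ₗ LinearMap.toSpanSingleton R ↥m ⟨a, ham⟩ with hg
  have hgsurj : Function.Surjective g := by
    intro t
    obtain ⟨w, rfl⟩ := pA.mkQ_surjective t
    obtain ⟨y, hy, z, hz, hyz⟩ := Submodule.mem_sup.mp (hgen ↑w w.2)
    obtain ⟨r, rfl⟩ := Ideal.mem_span_singleton'.mp hz
    refine ⟨r, ?_⟩
    show pA.mkQ (r • (⟨a, ham⟩ : ↥m)) = pA.mkQ w
    rw [Submodule.mkQ_apply, Submodule.mkQ_apply, Submodule.Quotient.eq]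
    show ((r • (⟨a, ham⟩ : ↥m) - w : ↥m) : R) ∈ A
    have hc : ((r • (⟨a, ham⟩ : ↥m) - w : ↥m) : R) = -y := by
      push_cast
      rw [smul_eq_mul, ← hyz]; ring
    rw [hc]
    exact A.neg_mem hy
  have hgker : LinearMap.ker g = (m : Submodule R R) := by
    ext r
    rw [LinearMap.mem_ker, hg, LinearMap.comp_apply, LinearMap.toSpanSingleton_apply,
      Submodule.mkQ_apply, Submodule.Quotient.mk_eq_zero]
    have hmem : r • (⟨a, ham⟩ : ↥m) ∈ pA ↔ r * a ∈ A := Iff.rfl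
    rw [hmem]
    constructor
    · intro h
      by_contra hrm
      have hu : IsUnit r := by
        by_contra hru
        exact hrm ((IsLocalRing.mem_maximalIdeal r).mpr hru)
      obtain ⟨u, rfl⟩ := hu
      apply haA
      have hra : a = ↑u⁻¹ * (↑u * a) := by
        rw [← mul_assoc]; simp
      rw [hra]
      exact A.mul_mem_left _ h
    · intro hrm
      exact hm2A (by rw [pow_two]; exact Ideal.mul_mem_mul hrm ham)
  have e2 : κ ≃ₗ[R] (↥m ⧸ pA) :=
    (Submodule.quotEquivOfEq (m : Submodule R R) (LinearMap.ker g) hgker.symm).trans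
      (g.quotKerEquivOfSurjective hgsurj)
  -- torsion structures : everything is killed by m
  have htV : Module.IsTorsionBySet R (↥m ⧸ p2) (m : Set R) :=
    (Module.isTorsionBySet_quotient_iff p2 (m : Set R)).mpr fun y r hr => by
      show ((r • y : ↥m) : R) ∈ m ^ 2
      rw [pow_two]
      exact Ideal.mul_mem_mul hr y.2
  have htT : Module.IsTorsionBySet R (↥m ⧸ pA) (m : Set R) :=
    (Module.isTorsionBySet_quotient_iff pA (m : Set R)).mpr fun y r hr => by
      show ((r • y : ↥m) : R) ∈ A
      exact hm2A (by rw [pow_two]; exact Ideal.mul_mem_mul hr y.2)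
  have htA : Module.IsTorsionBySet R (↥A ⧸ q2) (m : Set R) :=
    (Module.isTorsionBySet_quotient_iff q2 (m : Set R)).mpr fun y r hr => by
      show ((r • y : ↥A) : R) ∈ m ^ 2
      rw [pow_two]
      exact Ideal.mul_mem_mul hr (hAm y.2)
  letI iV : Module κ (↥m ⧸ p2) := htV.module
  letI iT : Module κ (↥m ⧸ pA) := htT.module
  letI iA : Module κ (↥A ⧸ q2) := htA.module
  letI sV : IsScalarTower R κ (↥m ⧸ p2) := htV.isScalarTower
  letI sT : IsScalarTower R κ (↥m ⧸ pA) := htT.isScalarTower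
  letI sA : IsScalarTower R κ (↥A ⧸ q2) := htA.isScalarTower
  have hsurjκ : Function.Surjective (algebraMap R κ) := Ideal.Quotient.mk_surjective
  -- extend everything to κ-linear maps
  let eκ : (↥m ⧸ p2) ≃ₗ[κ] (Fin k → κ) := e.extendScalarsOfSurjective hsurjκ
  let eTκ : κ ≃ₗ[κ] (↥m ⧸ pA) := e2.extendScalarsOfSurjective hsurjκ
  let πκ : (↥m ⧸ p2) →ₗ[κ] (↥m ⧸ pA) := π.extendScalarsOfSurjective hsurjκ
  let ψκ : (↥A ⧸ q2) →ₗ[κ] (↥m ⧸ p2) := ψ.extendScalarsOfSurjective hsurjκ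
  haveI : Module.Finite κ (↥m ⧸ p2) := Module.Finite.equiv eκ.symm
  have hfV : Module.finrank κ (↥m ⧸ p2) = k := by
    rw [LinearEquiv.finrank_eq eκ, Module.finrank_fin_fun]
  have hfT : Module.finrank κ (↥m ⧸ pA) = 1 := by
    rw [← LinearEquiv.finrank_eq eTκ, Module.finrank_self]
  have hrank := LinearMap.finrank_range_add_finrank_ker πκ
  have hrangeT : LinearMap.range πκ = ⊤ := LinearMap.range_eq_top.mpr hπsurj
  rw [hrangeT, finrank_top, hfV, hfT] at hrank
  -- identify A/m² with ker πκ
  have hψκinj : Function.Injective ψκ := by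
    have h := LinearMap.ker_eq_bot.mp hψker
    exact h
  have hrκ : LinearMap.range ψκ = LinearMap.ker πκ := by
    ext v
    constructor
    · rintro ⟨y, rfl⟩
      show π (ψ y) = 0
      have : ψ y ∈ LinearMap.ker π := by
        rw [← hrange_ker]; exact LinearMap.mem_range_self ψ y
      exact this
    · intro hv
      have hv' : v ∈ LinearMap.ker π := hv
      have hv'' : v ∈ LinearMap.range ψ := by rw [hrange_ker]; exact hv'
      obtain ⟨y, hy⟩ := hv''
      exact ⟨y, hy⟩
  let e1κ : (↥A ⧸ q2) ≃ₗ[κ] ↥(LinearMap.ker πκ) :=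
    (LinearEquiv.ofInjective ψκ hψκinj).trans (LinearEquiv.ofEq _ _ hrκ)
  haveI : Module.Finite κ (↥A ⧸ q2) := Module.Finite.equiv e1κ.symm
  have hfA : Module.finrank κ (↥A ⧸ q2) = k - 1 := by
    rw [LinearEquiv.finrank_eq e1κ]
    omega
  let b : Module.Basis (Fin (k - 1)) κ (↥A ⧸ q2) := Module.finBasisOfFinrankEq κ _ hfA
  exact ⟨LinearEquiv.restrictScalars R b.equivFun⟩
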